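/- Let ℬ be a building set on [d] that is △-closed. Then for any i, j, k ∈ [d] and any K ∈ N_{i,j}^k(ℬ), the map J ↦ J △ K is a bijection from N_{i,k}^j(ℬ) to N_{j,k}^i(ℬ). In particular, if N_{i,j}^k(ℬ) and N_{j,k}^i(ℬ) are both nonempty, then |N_{i,j}^k(ℬ)| = |N_{j,k}^i(ℬ)| = |N_{i,k}^j(ℬ)|. -/
import Mathlib

lemma aux17 {d : ℕ} {B : Finset (Finset (Fin d))}
    (htriangle : ∀ I ∈ B, ∀ J ∈ B, ¬ I ⊆ J → ¬ J ⊆ I → (I ∩ J).Nonempty →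
      symmDiff I J ∈ B)
    {a b c : Fin d} {K : Finset (Fin d)}
    (hKB : K ∈ B) (haK : a ∈ K) (hbK : b ∈ K) (hcK : c ∉ K) :
    Set.BijOn (fun J => symmDiff J K)
      {J | J ∈ B ∧ a ∈ J ∧ c ∈ J ∧ b ∉ J}
      {J | J ∈ B ∧ b ∈ J ∧ c ∈ J ∧ a ∉ J} := by
  have hmap : ∀ J, J ∈ B → a ∈ J → c ∈ J → b ∉ J →
      symmDiff J K ∈ B ∧ b ∈ symmDiff J K ∧ c ∈ symmDiff J K ∧ a ∉ symmDiff J K := by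
    intro J hJB haJ hcJ hbJ
    refine ⟨htriangle J hJB K hKB (fun h => hcK (h hcJ)) (fun h => hbJ (h hbK))
      ⟨a, Finset.mem_inter.2 ⟨haJ, haK⟩⟩, ?_, ?_, ?_⟩ <;>
      simp [Finset.mem_symmDiff, haJ, haK, hbK, hbJ, hcJ, hcK]
  have hmap' : ∀ J, J ∈ B → b ∈ J → c ∈ J → a ∉ J →
      symmDiff J K ∈ B ∧ a ∈ symmDiff J K ∧ c ∈ symmDiff J K ∧ b ∉ symmDiff J K := by
    intro J hJB hbJ hcJ haJ
    refine ⟨htriangle J hJB K hKB (fun h => hcK (h hcJ)) (fun h => haJ (h haK))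
      ⟨b, Finset.mem_inter.2 ⟨hbJ, hbK⟩⟩, ?_, ?_, ?_⟩ <;>
      simp [Finset.mem_symmDiff, haJ, haK, hbK, hbJ, hcJ, hcK]
  refine ⟨?_, ?_, ?_⟩
  · rintro J ⟨h1, h2, h3, h4⟩
    exact hmap J h1 h2 h3 h4
  · intro J₁ _ J₂ _ h
    have : symmDiff (symmDiff J₁ K) K = symmDiff (symmDiff J₂ K) K := by
      simp only at h; rw [h]
    simpa [symmDiff_symmDiff_cancel_right] using this
  · rintro M ⟨h1, h2, h3, h4⟩
    refine ⟨symmDiff M K, hmap' M h1 h2 h3 h4, ?_⟩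
    simp [symmDiff_symmDiff_cancel_right]

lemma cardaux17 {d : ℕ} {s t : Finset (Finset (Fin d))} {f : Finset (Fin d) → Finset (Fin d)}
    (h : Set.BijOn f ↑s ↑t) : s.card = t.card := by
  have h2 : (↑t : Set (Finset (Fin d))).ncard = (↑s : Set (Finset (Fin d))).ncard := by
    rw [← h.image_eq]; exact Set.ncard_image_of_injOn h.injOn
  simpa [Set.ncard_coe_finset] using h2.symm

/-- For a `△`-closed building set `ℬ` on `[d]` and distinct `i j k`, for any
`K ∈ N_{i,j}^k(ℬ)` the map `J ↦ J △ K` is a bijection from `N_{i,k}^j(ℬ)` to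
`N_{j,k}^i(ℬ)`; hence if `N_{i,j}^k` and `N_{j,k}^i` are nonempty then all three
sets `N_{i,j}^k, N_{j,k}^i, N_{i,k}^j` have the same cardinality. -/
theorem stmt17 (d : ℕ) (B : Finset (Finset (Fin d)))
    (hne : ∀ I ∈ B, I.Nonempty)
    (hbuild : ∀ I ∈ B, ∀ J ∈ B, (I ∩ J).Nonempty → I ∪ J ∈ B)
    (htriangle : ∀ I ∈ B, ∀ J ∈ B, ¬ I ⊆ J → ¬ J ⊆ I → (I ∩ J).Nonempty →
      symmDiff I J ∈ B)
    (i j k : Fin d) (hij : i ≠ j) (hjk : j ≠ k) (hik : i ≠ k)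
    (N : Fin d → Fin d → Fin d → Finset (Finset (Fin d)))
    (hN : ∀ a b c, N a b c = B.filter (fun I => a ∈ I ∧ b ∈ I ∧ c ∉ I)) :
    (∀ K ∈ N i j k,
      Set.BijOn (fun J => symmDiff J K) ↑(N i k j) ↑(N j k i)) ∧
    ((N i j k).Nonempty → (N j k i).Nonempty →
      (N i j k).card = (N j k i).card ∧ (N j k i).card = (N i k j).card) := by
  have hcoe : ∀ a b c : Fin d, (↑(N a b c) : Set (Finset (Fin d))) =
      {J | J ∈ B ∧ a ∈ J ∧ b ∈ J ∧ c ∉ J} := by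
    intro a b c; ext J; simp [hN, Finset.mem_filter]
  have key : ∀ K ∈ N i j k,
      Set.BijOn (fun J => symmDiff J K) ↑(N i k j) ↑(N j k i) := by
    intro K hK
    rw [hN, Finset.mem_filter] at hK
    obtain ⟨hKB, hiK, hjK, hkK⟩ := hK
    rw [hcoe, hcoe]
    exact aux17 htriangle hKB hiK hjK hkK
  refine ⟨key, fun ⟨K, hK⟩ ⟨M, hM⟩ => ?_⟩
  have e1 : (N i k j).card = (N j k i).card := cardaux17 (key K hK)
  rw [hN, Finset.mem_filter] at hM
  obtain ⟨hMB, hjM, hkM, hiM⟩ := hM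
  have key2 : Set.BijOn (fun J => symmDiff J M) ↑(N i j k) ↑(N i k j) := by
    rw [hcoe, hcoe]
    have := aux17 htriangle hMB hjM hkM hiM
    convert this using 2 <;> · ext J; constructor <;> · rintro ⟨h1,h2,h3,h4⟩; exact ⟨h1,h3,h2,h4⟩
  have e2 : (N i j k).card = (N i k j).card := cardaux17 key2
  omega
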